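/- Let Λ = ℤⁿ + iℤⁿ ⊂ ℂⁿ and D = [0,1)ⁿ + i[0,1)ⁿ. For ε > 0 let A_ε be the set of Λ-periodic upper semicontinuous ψ : ℂⁿ → [−∞, ∞) such that z ↦ ψ(z) + ε|z|² is plurisubharmonic on ℂⁿ and ∫_D e^{ψ} dλ = 1, and define dV_ε(x) = sup{e^{ψ(x)} : ψ ∈ A_ε}. Then the function x ↦ inf_{ε ∈ (0,1]} dV_ε(x) is a constant function on ℂⁿ whose value c satisfies 1 ≤ c ≤ C, where C is a constant depending only on n. In particular the limit 'canonical volume density' for the torus is a well-defined positive constant. -/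

import Mathlib

open MeasureTheory Set
open scoped ENNReal NNReal

noncomputable section

/-- `log` with values in `EReal`, with `log 0 = ⊥` (and junk `⊥` for negative inputs). -/
def elog (t : ℝ) : EReal := if t ≤ 0 then (⊥ : EReal) else ((Real.log t : ℝ) : EReal)

/-- The positive-part truncation `EReal → ℝ≥0∞`. -/
def erealToENNReal (x : EReal) : ℝ≥0∞ :=
  if x = ⊤ then ⊤ else ENNReal.ofReal x.toReal

/-- Integral of an `EReal`-valued function, as an `EReal`
(positive part minus negative part, each computed as a lower integral). -/
def eintegral {α : Type*} [MeasurableSpace α] (μ : Measure α) (u : α → EReal) : EReal :=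
  ((∫⁻ x, erealToENNReal (u x) ∂μ : ℝ≥0∞) : EReal)
    - ((∫⁻ x, erealToENNReal (-(u x)) ∂μ : ℝ≥0∞) : EReal)

/-- The mean of an `EReal`-valued function over the circle parameter `θ ∈ (0, 2π]`. -/
def circleMean (u : ℝ → EReal) : EReal :=
  (((2 * Real.pi)⁻¹ : ℝ) : EReal) *
    eintegral (volume.restrict (Set.Ioc (0 : ℝ) (2 * Real.pi))) u

/-- `u` is plurisubharmonic on an open set `Ω ⊆ ℂⁿ`: it is upper semicontinuous on `Ω`
and satisfies the sub-mean value inequality on every complex circle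
whose closed disc hull lies in `Ω`. -/
def IsPSHOn {n : ℕ} (Ω : Set (Fin n → ℂ)) (u : (Fin n → ℂ) → EReal) : Prop :=
  UpperSemicontinuousOn u Ω ∧
  ∀ a ∈ Ω, ∀ b : Fin n → ℂ, ∀ r : ℝ, 0 < r →
    (∀ l : ℂ, ‖l‖ ≤ r → a + l • b ∈ Ω) →
    u a ≤ circleMean (fun θ : ℝ =>
      u (a + (((r : ℂ) * Complex.exp (θ * Complex.I)) • b)))

/-- The open unit polydisk in `ℂⁿ`. -/
def openPolydisk (n : ℕ) : Set (Fin n → ℂ) := {z | ∀ i, ‖z i‖ < 1}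

/-- The closed unit polydisk in `ℂⁿ`. -/
def closedPolydisk (n : ℕ) : Set (Fin n → ℂ) := {z | ∀ i, ‖z i‖ ≤ 1}


/-- `ψ` is periodic with respect to the lattice `Λ = ℤⁿ + iℤⁿ ⊂ ℂⁿ`. -/
def LambdaPeriodic {n : ℕ} (ψ : (Fin n → ℂ) → EReal) : Prop :=
  ∀ z : Fin n → ℂ, ∀ k l : Fin n → ℤ,
    ψ (fun i => z i + (k i : ℂ) + (l i : ℂ) * Complex.I) = ψ z

/-- The fundamental domain `D = [0,1)ⁿ + i[0,1)ⁿ` of the torus `ℂⁿ/Λ`. -/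
def fundDomain (n : ℕ) : Set (Fin n → ℂ) :=
  {z | ∀ i, (z i).re ∈ Set.Ico (0 : ℝ) 1 ∧ (z i).im ∈ Set.Ico (0 : ℝ) 1}

/-- The class `A_ε` of admissible weights on the torus `ℂⁿ/Λ`: `Λ`-periodic upper
semicontinuous `ψ` with `ψ(z) + ε|z|²` plurisubharmonic and `∫_D e^ψ dλ = 1`. -/
def Aset (n : ℕ) (ε : ℝ) : Set ((Fin n → ℂ) → EReal) :=
  {ψ | LambdaPeriodic ψ ∧ UpperSemicontinuous ψ ∧
    IsPSHOn Set.univ (fun z => ψ z + ((ε * ∑ i, Complex.normSq (z i) : ℝ) : EReal)) ∧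
    (∫⁻ z in fundDomain n, EReal.exp (ψ z)) = 1}

/-- The approximating canonical volume density `dV_ε(x) = sup{e^{ψ(x)} : ψ ∈ A_ε}`. -/
def dVeps (n : ℕ) (ε : ℝ) (x : Fin n → ℂ) : ℝ≥0∞ :=
  ⨆ ψ ∈ Aset n ε, EReal.exp (ψ x)




@[simp] lemma erealToENNReal_top : erealToENNReal ⊤ = ⊤ := by simp [erealToENNReal]
@[simp] lemma erealToENNReal_bot : erealToENNReal ⊥ = 0 := by simp [erealToENNReal]
@[simp] lemma erealToENNReal_coe (t : ℝ) : erealToENNReal (t : EReal) = ENNReal.ofReal t := by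
  simp [erealToENNReal]

lemma monotone_erealToENNReal : Monotone erealToENNReal := by
  intro x y h
  induction x with
  | bot => simp
  | coe t =>
      induction y with
      | bot => simp at h
      | coe s =>
          simp only [erealToENNReal_coe]
          exact ENNReal.ofReal_le_ofReal (EReal.coe_le_coe_iff.mp h)
      | top => simp
  | top =>
      rw [top_le_iff] at h
      rw [h]

lemma measurable_erealToENNReal : Measurable erealToENNReal :=
  monotone_erealToENNReal.measurable

lemma erealToENNReal_le_exp (x : EReal) : erealToENNReal x ≤ EReal.exp x := by
  induction x with
  | bot => simp
  | coe t =>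
      simp only [erealToENNReal_coe, EReal.exp_coe]
      exact ENNReal.ofReal_le_ofReal (by linarith [Real.add_one_le_exp t])
  | top => simp

private lemma max_sum_identity (t c : ℝ) :
    max (t + c) 0 + max (-t) 0 + max (-c) 0 = max (-(t + c)) 0 + max t 0 + max c 0 := by
  have h : ∀ x : ℝ, max x 0 = (x + |x|) / 2 := by
    intro x
    rcases le_total x 0 with hx | hx
    · rw [max_eq_right hx, abs_of_nonpos hx]; ring
    · rw [max_eq_left hx, abs_of_nonneg hx]; ring
  rw [h, h, h, h, h, h, abs_neg, abs_neg, abs_neg]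
  ring

private lemma ofReal_sum_identity (t c : ℝ) :
    ENNReal.ofReal (t + c) + ENNReal.ofReal (-t) + ENNReal.ofReal (-c)
      = ENNReal.ofReal (-(t + c)) + ENNReal.ofReal t + ENNReal.ofReal c := by
  have h2 : ∀ a b c : ℝ, ENNReal.ofReal a + ENNReal.ofReal b + ENNReal.ofReal c
      = ((a.toNNReal + b.toNNReal + c.toNNReal : ℝ≥0) : ℝ≥0∞) := by
    intro a b c; simp [ENNReal.ofReal]
  rw [h2, h2, ENNReal.coe_inj]
  apply NNReal.coe_injective
  push_cast [Real.coe_toNNReal']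
  exact max_sum_identity t c

lemma erealToENNReal_add_identity (x : EReal) (c : ℝ) :
    erealToENNReal (x + c) + erealToENNReal (-x) + ENNReal.ofReal (-c)
      = erealToENNReal (-(x + c)) + erealToENNReal x + ENNReal.ofReal c := by
  induction x with
  | bot => simp
  | coe t =>
      rw [← EReal.coe_add, ← EReal.coe_neg, ← EReal.coe_neg, erealToENNReal_coe,
        erealToENNReal_coe, erealToENNReal_coe, erealToENNReal_coe]
      exact ofReal_sum_identity t c
  | top => simp [EReal.top_add_coe]

lemma erealToENNReal_add_coe_le (x : EReal) (c : ℝ) :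
    erealToENNReal (x + c) ≤ erealToENNReal x + ENNReal.ofReal c := by
  induction x with
  | bot => simp
  | coe t =>
      rw [← EReal.coe_add, erealToENNReal_coe, erealToENNReal_coe]
      exact ENNReal.ofReal_add_le
  | top => simp [EReal.top_add_coe]

lemma EReal.add_coe_neg_cancel (x : EReal) (c : ℝ) : (x + c) + ((-c : ℝ) : EReal) = x := by
  induction x with
  | bot => simp
  | coe t => norm_cast; ring
  | top => simp [EReal.top_add_coe]

lemma EReal.neg_add_coe (x : EReal) (c : ℝ) : -(x + (c : EReal)) = -x + ((-c : ℝ) : EReal) := by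
  induction x with
  | bot => simp
  | coe t => norm_cast; ring
  | top => simp [EReal.top_add_coe]

lemma measurable_add_real {α : Type*} [MeasurableSpace α] {f : α → EReal} {h : α → ℝ}
    (hf : Measurable f) (hh : Measurable h) :
    Measurable fun x => f x + (h x : EReal) := by
  have hc : Continuous fun p : EReal × ℝ => p.1 + (p.2 : EReal) := by
    rw [continuous_iff_continuousAt]
    intro p
    have h1 : ContinuousAt (fun q : EReal × EReal => q.1 + q.2) (p.1, (p.2 : EReal)) :=
      EReal.continuousAt_add (Or.inr (EReal.coe_ne_bot _)) (Or.inr (EReal.coe_ne_top _))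
    have h2 : ContinuousAt (fun p : EReal × ℝ => (p.1, (p.2 : EReal))) p :=
      (continuous_fst.prodMk (continuous_coe_real_ereal.comp continuous_snd)).continuousAt
    exact ContinuousAt.comp (x := p) h1 h2
  exact hc.measurable.comp (hf.prodMk hh)

lemma coe_ennreal_eq_coe_toReal {a : ℝ≥0∞} (ha : a ≠ ⊤) : (a : EReal) = ((a.toReal : ℝ) : EReal) := by
  rw [← ENNReal.ofReal_toReal ha, EReal.coe_ennreal_ofReal,
    max_eq_left ENNReal.toReal_nonneg, ENNReal.ofReal_toReal ha]

lemma eintegral_add_real {α : Type*} [MeasurableSpace α] (μ : Measure α) [IsFiniteMeasure μ]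
    {f : α → EReal} (hf : Measurable f) {h : α → ℝ} (hhm : Measurable h)
    (hhi : Integrable h μ) :
    eintegral μ (fun x => f x + (h x : EReal))
      = eintegral μ f + ((∫ x, h x ∂μ : ℝ) : EReal) := by
  have hmeas_sum : Measurable fun x => f x + (h x : EReal) := measurable_add_real hf hhm
  have hnegf : Measurable fun x => -(f x) := hf.neg
  have hnegsum : Measurable fun x => -(f x + (h x : EReal)) := hmeas_sum.neg
  set P := ∫⁻ x, erealToENNReal (f x) ∂μ with hPdef
  set N := ∫⁻ x, erealToENNReal (-(f x)) ∂μ with hNdef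
  set P' := ∫⁻ x, erealToENNReal (f x + (h x : EReal)) ∂μ with hP'def
  set N' := ∫⁻ x, erealToENNReal (-(f x + (h x : EReal))) ∂μ with hN'def
  set Hp := ∫⁻ x, ENNReal.ofReal (h x) ∂μ with hHpdef
  set Hn := ∫⁻ x, ENNReal.ofReal (-(h x)) ∂μ with hHndef
  have e1 : eintegral μ (fun x => f x + (h x : EReal)) = (P' : EReal) - (N' : EReal) := rfl
  have e2 : eintegral μ f = (P : EReal) - (N : EReal) := rfl
  have hHp : Hp ≠ ⊤ := by
    refine (lt_of_le_of_lt (lintegral_mono fun x => ?_) hhi.2).ne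
    rw [← ofReal_norm]
    exact ENNReal.ofReal_le_ofReal (le_abs_self _)
  have hHn : Hn ≠ ⊤ := by
    refine (lt_of_le_of_lt (lintegral_mono fun x => ?_) hhi.2).ne
    rw [← ofReal_norm]
    exact ENNReal.ofReal_le_ofReal (neg_le_abs _)
  have hBmeas : Measurable fun x => erealToENNReal (-(f x)) :=
    measurable_erealToENNReal.comp hnegf
  have hfmeas' : Measurable fun x => erealToENNReal (f x) :=
    measurable_erealToENNReal.comp hf
  have hCp : Measurable fun x => ENNReal.ofReal (h x) := hhm.ennreal_ofReal
  have hCn : Measurable fun x => ENNReal.ofReal (-(h x)) := hhm.neg.ennreal_ofReal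
  have hkey : P' + N + Hn = N' + P + Hp := by
    have l1 : ∫⁻ x, (erealToENNReal (f x + (h x : EReal)) + erealToENNReal (-(f x))
            + ENNReal.ofReal (-(h x))) ∂μ = P' + N + Hn := by
      rw [lintegral_add_right _ hCn, lintegral_add_right _ hBmeas]
    have l2 : ∫⁻ x, (erealToENNReal (-(f x + (h x : EReal))) + erealToENNReal (f x)
            + ENNReal.ofReal (h x)) ∂μ = N' + P + Hp := by
      rw [lintegral_add_right _ hCp, lintegral_add_right _ hfmeas']
    rw [← l1, ← l2]
    exact lintegral_congr fun x => erealToENNReal_add_identity (f x) (h x)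
  have hb1 : P ≤ P' + Hn := by
    have hpt : ∀ x, erealToENNReal (f x)
        ≤ erealToENNReal (f x + (h x : EReal)) + ENNReal.ofReal (-(h x)) := by
      intro x
      conv_lhs => rw [← EReal.add_coe_neg_cancel (f x) (h x)]
      exact erealToENNReal_add_coe_le _ _
    calc P ≤ ∫⁻ x, (erealToENNReal (f x + (h x : EReal)) + ENNReal.ofReal (-(h x))) ∂μ :=
          lintegral_mono hpt
      _ = P' + Hn := lintegral_add_right _ hCn
  have hb2 : N ≤ N' + Hp := by
    have hpt : ∀ x, erealToENNReal (-(f x))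
        ≤ erealToENNReal (-(f x + (h x : EReal))) + ENNReal.ofReal (h x) := by
      intro x
      have : -(f x) = -(f x + (h x : EReal)) + ((h x : ℝ) : EReal) := by
        rw [EReal.neg_add_coe]
        have := EReal.add_coe_neg_cancel (-(f x)) (-(h x))
        rw [neg_neg] at this
        exact this.symm
      rw [this]
      exact erealToENNReal_add_coe_le _ _
    calc N ≤ ∫⁻ x, (erealToENNReal (-(f x + (h x : EReal))) + ENNReal.ofReal (h x)) ∂μ :=
          lintegral_mono hpt
      _ = N' + Hp := lintegral_add_right _ hCp
  have hb3 : P' ≤ P + Hp :=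
    calc P' ≤ ∫⁻ x, (erealToENNReal (f x) + ENNReal.ofReal (h x)) ∂μ :=
          lintegral_mono fun x => erealToENNReal_add_coe_le _ _
      _ = P + Hp := lintegral_add_right _ hCp
  have hb4 : N' ≤ N + Hn := by
    have hpt : ∀ x, erealToENNReal (-(f x + (h x : EReal)))
        ≤ erealToENNReal (-(f x)) + ENNReal.ofReal (-(h x)) := by
      intro x
      rw [EReal.neg_add_coe]
      exact erealToENNReal_add_coe_le _ _
    calc N' ≤ ∫⁻ x, (erealToENNReal (-(f x)) + ENNReal.ofReal (-(h x))) ∂μ := lintegral_mono hpt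
      _ = N + Hn := lintegral_add_right _ hCn
  by_cases hPt : P = ⊤
  · have hP't : P' = ⊤ := by
      by_contra hc
      exact (hb1.trans_lt (ENNReal.add_lt_top.mpr
        ⟨lt_top_iff_ne_top.mpr hc, lt_top_iff_ne_top.mpr hHn⟩)).ne hPt
    by_cases hNt : N = ⊤
    · have hN't : N' = ⊤ := by
        by_contra hc
        exact (hb2.trans_lt (ENNReal.add_lt_top.mpr
          ⟨lt_top_iff_ne_top.mpr hc, lt_top_iff_ne_top.mpr hHp⟩)).ne hNt
      rw [e1, e2, hP't, hN't, hPt, hNt]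
      simp [sub_eq_add_neg]
    · have hN't : N' ≠ ⊤ := fun hc => (hb4.trans_lt (ENNReal.add_lt_top.mpr
          ⟨lt_top_iff_ne_top.mpr hNt, lt_top_iff_ne_top.mpr hHn⟩)).ne hc
      rw [e1, e2, hP't, hPt, coe_ennreal_eq_coe_toReal hN't, coe_ennreal_eq_coe_toReal hNt,
        EReal.coe_ennreal_top]
      simp only [sub_eq_add_neg, ← EReal.coe_neg, EReal.top_add_coe]
  · by_cases hNt : N = ⊤
    · have hN't : N' = ⊤ := by
        by_contra hc
        exact (hb2.trans_lt (ENNReal.add_lt_top.mpr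
          ⟨lt_top_iff_ne_top.mpr hc, lt_top_iff_ne_top.mpr hHp⟩)).ne hNt
      rw [e1, e2, hN't, hNt, EReal.coe_ennreal_top]
      simp [sub_eq_add_neg]
    · have hP't : P' ≠ ⊤ := fun hc => (hb3.trans_lt (ENNReal.add_lt_top.mpr
          ⟨lt_top_iff_ne_top.mpr hPt, lt_top_iff_ne_top.mpr hHp⟩)).ne hc
      have hN't : N' ≠ ⊤ := fun hc => (hb4.trans_lt (ENNReal.add_lt_top.mpr
          ⟨lt_top_iff_ne_top.mpr hNt, lt_top_iff_ne_top.mpr hHn⟩)).ne hc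
      have hint : ∫ x, h x ∂μ = Hp.toReal - Hn.toReal :=
        integral_eq_lintegral_pos_part_sub_lintegral_neg_part hhi
      have hreal : P'.toReal - N'.toReal = (P.toReal - N.toReal) + ∫ x, h x ∂μ := by
        have := congrArg ENNReal.toReal hkey
        rw [ENNReal.toReal_add (ENNReal.add_ne_top.mpr ⟨hP't, hNt⟩) hHn,
          ENNReal.toReal_add hP't hNt,
          ENNReal.toReal_add (ENNReal.add_ne_top.mpr ⟨hN't, hPt⟩) hHp,
          ENNReal.toReal_add hN't hPt] at this
        rw [hint]
        linarith
      rw [e1, e2, coe_ennreal_eq_coe_toReal hP't, coe_ennreal_eq_coe_toReal hN't,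
        coe_ennreal_eq_coe_toReal hPt, coe_ennreal_eq_coe_toReal hNt]
      rw [sub_eq_add_neg, sub_eq_add_neg, ← EReal.coe_neg, ← EReal.coe_neg, ← EReal.coe_add,
        ← EReal.coe_add, ← EReal.coe_add, EReal.coe_eq_coe_iff]
      linarith

lemma two_pi_pos : (0 : ℝ) < 2 * Real.pi := by positivity

instance : IsFiniteMeasure (volume.restrict (Set.Ioc (0 : ℝ) (2 * Real.pi))) :=
  ⟨by simp [Real.volume_Ioc]; exact ENNReal.mul_lt_top (by simp) ENNReal.ofReal_lt_top⟩

lemma circle_measure_univ :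
    (volume.restrict (Set.Ioc (0 : ℝ) (2 * Real.pi))) Set.univ = ENNReal.ofReal (2 * Real.pi) := by
  simp [Real.volume_Ioc]

lemma coe_mul_add_coe (r s : ℝ) (hr : 0 < r) (X : EReal) :
    (r : EReal) * (X + (s : EReal)) = (r : EReal) * X + ((r * s : ℝ) : EReal) := by
  induction X with
  | bot =>
      rw [EReal.bot_add, EReal.coe_mul_bot_of_pos hr, EReal.bot_add]
  | coe t => norm_cast; ring
  | top =>
      rw [EReal.top_add_coe, EReal.coe_mul_top_of_pos hr, EReal.top_add_coe]

lemma circleMean_add_real {f : ℝ → EReal} (hf : Measurable f) {h : ℝ → ℝ}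
    (hhm : Measurable h) (hhi : IntegrableOn h (Set.Ioc (0 : ℝ) (2 * Real.pi))) :
    circleMean (fun θ => f θ + (h θ : EReal))
      = circleMean f
        + (((2 * Real.pi)⁻¹ * ∫ θ in Set.Ioc (0 : ℝ) (2 * Real.pi), h θ : ℝ) : EReal) := by
  unfold circleMean
  rw [eintegral_add_real _ hf hhm hhi]
  exact coe_mul_add_coe _ _ (by positivity) _

lemma circleMean_zero : circleMean (fun _ : ℝ => (0 : EReal)) = 0 := by
  unfold circleMean eintegral
  simp [erealToENNReal]

lemma exp_circleMean_le {f : ℝ → EReal} (hf : Measurable f) :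
    EReal.exp (circleMean f)
      ≤ ENNReal.ofReal ((2 * Real.pi)⁻¹)
          * ∫⁻ θ in Set.Ioc (0 : ℝ) (2 * Real.pi), EReal.exp (f θ) := by
  set μ := volume.restrict (Set.Ioc (0 : ℝ) (2 * Real.pi)) with hμ
  set P := ∫⁻ x, erealToENNReal (f x) ∂μ with hP
  set N := ∫⁻ x, erealToENNReal (-(f x)) ∂μ with hN
  have hexpmeas : Measurable fun θ => EReal.exp (f θ) :=
    (EReal.exp_monotone.measurable).comp hf
  have e0 : circleMean f = (((2 * Real.pi)⁻¹ : ℝ) : EReal) * ((P : EReal) - (N : EReal)) := rfl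
  by_cases hPt : P = ⊤
  · -- RHS is ⊤
    have : ∫⁻ θ, EReal.exp (f θ) ∂μ = ⊤ := by
      rw [eq_top_iff, ← hPt]
      exact lintegral_mono fun x => erealToENNReal_le_exp _
    rw [hμ] at this
    rw [this, ENNReal.mul_top (by rw [ne_eq, ENNReal.ofReal_eq_zero, not_le]; positivity)]
    exact le_top
  · by_cases hNt : N = ⊤
    · have hcm : circleMean f = ⊥ := by
        rw [e0, hNt, EReal.coe_ennreal_top, sub_eq_add_neg, EReal.neg_top, EReal.add_bot,
          EReal.coe_mul_bot_of_pos (by positivity)]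
      rw [hcm]
      simp
    · -- finite case
      set m := (2 * Real.pi)⁻¹ * (P.toReal - N.toReal) with hm
      have hcm : circleMean f = (m : EReal) := by
        rw [e0, coe_ennreal_eq_coe_toReal hPt, coe_ennreal_eq_coe_toReal hNt]
        norm_cast
      -- the centered function
      set g := fun θ => f θ + ((-m : ℝ) : EReal) with hg
      have hgmeas : Measurable g := measurable_add_real hf measurable_const
      have hgint : eintegral μ g = 0 := by
        rw [hg, eintegral_add_real μ hf measurable_const (integrable_const _)]
        have : eintegral μ f = ((P.toReal - N.toReal : ℝ) : EReal) := by
          show (P : EReal) - (N : EReal) = _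
          rw [coe_ennreal_eq_coe_toReal hPt, coe_ennreal_eq_coe_toReal hNt]
          norm_cast
        rw [this, integral_const, ← EReal.coe_add]
        norm_cast
        rw [measureReal_def, circle_measure_univ, ENNReal.toReal_ofReal (le_of_lt two_pi_pos)]
        rw [hm, smul_eq_mul, mul_neg, ← mul_assoc, mul_inv_cancel₀ (ne_of_gt two_pi_pos), one_mul,
          add_neg_cancel]
      set Pg := ∫⁻ x, erealToENNReal (g x) ∂μ with hPg
      set Ng := ∫⁻ x, erealToENNReal (-(g x)) ∂μ with hNg
      have hPgt : Pg ≠ ⊤ := by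
        refine (lt_of_le_of_lt (lintegral_mono fun x => erealToENNReal_add_coe_le (f x) (-m))
          ?_).ne
        rw [lintegral_add_right _ measurable_const, lintegral_const]
        exact ENNReal.add_lt_top.mpr ⟨lt_top_iff_ne_top.mpr hPt, ENNReal.mul_lt_top (by simp)
          (by rw [circle_measure_univ]; simp; exact ENNReal.mul_lt_top (by simp) ENNReal.ofReal_lt_top)⟩
      have hNgt : Ng ≠ ⊤ := by
        have hpt : ∀ x, erealToENNReal (-(g x))
            ≤ erealToENNReal (-(f x)) + ENNReal.ofReal m := by
          intro x
          rw [hg]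
          simp only []
          rw [EReal.neg_add_coe, neg_neg]
          exact erealToENNReal_add_coe_le _ _
        refine (lt_of_le_of_lt (lintegral_mono hpt) ?_).ne
        rw [lintegral_add_right _ measurable_const, lintegral_const]
        exact ENNReal.add_lt_top.mpr ⟨lt_top_iff_ne_top.mpr hNt, ENNReal.mul_lt_top (by simp)
          (by rw [circle_measure_univ]; simp; exact ENNReal.mul_lt_top (by simp) ENNReal.ofReal_lt_top)⟩
      have hPgNg : Pg = Ng := by
        have : (Pg : EReal) - (Ng : EReal) = 0 := hgint
        rw [coe_ennreal_eq_coe_toReal hPgt, coe_ennreal_eq_coe_toReal hNgt,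
          sub_eq_add_neg, ← EReal.coe_neg, ← EReal.coe_add] at this
        have h2 : Pg.toReal = Ng.toReal := by
          have h3 : (Pg.toReal + -Ng.toReal : ℝ) = 0 := by exact_mod_cast this
          linarith
        exact (ENNReal.toReal_eq_toReal_iff' hPgt hNgt).mp h2
      -- pointwise Jensen bound
      have hpoint : ∀ x : EReal, 1 + erealToENNReal x ≤ EReal.exp x + erealToENNReal (-x) := by
        intro x
        induction x with
        | bot => simp
        | coe t =>
            rw [← EReal.coe_neg, erealToENNReal_coe, erealToENNReal_coe, EReal.exp_coe]
            rcases le_total 0 t with ht | ht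
            · rw [ENNReal.ofReal_eq_zero.mpr (by linarith : -t ≤ 0), add_zero,
                ← ENNReal.ofReal_one, ← ENNReal.ofReal_add zero_le_one ht]
              exact ENNReal.ofReal_le_ofReal (by linarith [Real.add_one_le_exp t])
            · rw [ENNReal.ofReal_eq_zero.mpr ht, add_zero,
                ← ENNReal.ofReal_add (Real.exp_nonneg t) (by linarith : (0:ℝ) ≤ -t),
                ← ENNReal.ofReal_one]
              exact ENNReal.ofReal_le_ofReal (by linarith [Real.add_one_le_exp t])
        | top => simp
      have hgexp : Measurable fun θ => EReal.exp (g θ) :=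
        (EReal.exp_monotone.measurable).comp hgmeas
      have hEg : Measurable fun θ => erealToENNReal (g θ) :=
        measurable_erealToENNReal.comp hgmeas
      have hEng : Measurable fun θ => erealToENNReal (-(g θ)) :=
        measurable_erealToENNReal.comp hgmeas.neg
      have hint : ENNReal.ofReal (2 * Real.pi) ≤ ∫⁻ θ, EReal.exp (g θ) ∂μ := by
        have step : ∫⁻ θ, (1 + erealToENNReal (g θ)) ∂μ
            ≤ ∫⁻ θ, (EReal.exp (g θ) + erealToENNReal (-(g θ))) ∂μ :=
          lintegral_mono fun θ => hpoint (g θ)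
        rw [lintegral_add_left measurable_const, lintegral_add_right _ hEng,
          lintegral_const, one_mul, circle_measure_univ, ← hPg, ← hNg, ← hPgNg] at step
        exact ENNReal.le_of_add_le_add_right hPgt step
      -- reassemble
      have hfg : ∀ θ, EReal.exp (f θ) = EReal.exp (g θ) * ENNReal.ofReal (Real.exp m) := by
        intro θ
        have hgm : g θ + (m : EReal) = f θ := by
          rw [hg]
          have h5 := EReal.add_coe_neg_cancel (f θ) (-m)
          rw [neg_neg] at h5
          exact h5
        rw [← hgm, EReal.exp_add, EReal.exp_coe]
      calc EReal.exp (circleMean f) = ENNReal.ofReal (Real.exp m) := by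
            rw [hcm, EReal.exp_coe]
        _ ≤ ENNReal.ofReal ((2 * Real.pi)⁻¹) * (ENNReal.ofReal (2 * Real.pi)
              * ENNReal.ofReal (Real.exp m)) := by
            rw [← mul_assoc, ← ENNReal.ofReal_mul (by positivity), inv_mul_cancel₀
              (ne_of_gt two_pi_pos), ENNReal.ofReal_one, one_mul]
        _ ≤ ENNReal.ofReal ((2 * Real.pi)⁻¹) * ∫⁻ θ in Set.Ioc (0 : ℝ) (2 * Real.pi),
              EReal.exp (f θ) := by
            refine mul_le_mul_right ?_ _
            have heq : ∫⁻ θ, EReal.exp (f θ) ∂μ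
                = (∫⁻ θ, EReal.exp (g θ) ∂μ) * ENNReal.ofReal (Real.exp m) := by
              rw [← lintegral_mul_const _ hgexp]
              exact lintegral_congr fun θ => hfg θ
            show ENNReal.ofReal (2 * Real.pi) * ENNReal.ofReal (Real.exp m)
                ≤ ∫⁻ θ, EReal.exp (f θ) ∂μ
            rw [heq]
            exact mul_le_mul_left hint _
lemma integral_trig (c₀ α β : ℝ) :
    ∫ θ in Set.Ioc (0 : ℝ) (2 * Real.pi), (c₀ + (α * Real.cos θ + β * Real.sin θ))
      = 2 * Real.pi * c₀ := by
  rw [← intervalIntegral.integral_of_le (le_of_lt two_pi_pos)]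
  have h1 : IntervalIntegrable (fun _ : ℝ => c₀) volume 0 (2 * Real.pi) :=
    intervalIntegrable_const
  have h2 : IntervalIntegrable (fun θ : ℝ => α * Real.cos θ) volume 0 (2 * Real.pi) :=
    (continuous_const.mul Real.continuous_cos).intervalIntegrable _ _
  have h3 : IntervalIntegrable (fun θ : ℝ => β * Real.sin θ) volume 0 (2 * Real.pi) :=
    (continuous_const.mul Real.continuous_sin).intervalIntegrable _ _
  rw [intervalIntegral.integral_add h1 (h2.add h3), intervalIntegral.integral_add h2 h3,
    intervalIntegral.integral_const, intervalIntegral.integral_const_mul,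
    intervalIntegral.integral_const_mul, integral_cos, integral_sin,
    Real.sin_two_pi, Real.cos_two_pi]
  simp

lemma trig_measurable (c₀ α β : ℝ) :
    Measurable (fun θ : ℝ => c₀ + (α * Real.cos θ + β * Real.sin θ)) :=
  (continuous_const.add ((continuous_const.mul Real.continuous_cos).add
    (continuous_const.mul Real.continuous_sin))).measurable

lemma trig_integrableOn (c₀ α β : ℝ) :
    MeasureTheory.IntegrableOn (fun θ : ℝ => c₀ + (α * Real.cos θ + β * Real.sin θ))
      (Set.Ioc (0 : ℝ) (2 * Real.pi)) :=
  (continuous_const.add ((continuous_const.mul Real.continuous_cos).add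
    (continuous_const.mul Real.continuous_sin))).integrableOn_Ioc

/-- mean of trig polynomial is the constant term -/
lemma circleMean_trig (c₀ α β : ℝ) {f : ℝ → EReal} (hf : Measurable f) :
    circleMean (fun θ => f θ + ((c₀ + (α * Real.cos θ + β * Real.sin θ) : ℝ) : EReal))
      = circleMean f + (c₀ : EReal) := by
  rw [circleMean_add_real hf (trig_measurable c₀ α β) (trig_integrableOn c₀ α β),
    integral_trig]
  congr 2
  field_simp

/-- Expansion of `∑ normSq` along a complex circle. -/
lemma sum_normSq_circle {n : ℕ} (a b : Fin n → ℂ) (r θ : ℝ) :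
    (∑ i, Complex.normSq ((a + (((r : ℂ) * Complex.exp ((θ : ℂ) * Complex.I))) • b) i))
      = (∑ i, Complex.normSq (a i)) + r ^ 2 * (∑ i, Complex.normSq (b i))
        + ((2 * r * (∑ i, (a i * (starRingEnd ℂ) (b i))).re) * Real.cos θ
            + (2 * r * (∑ i, (a i * (starRingEnd ℂ) (b i))).im) * Real.sin θ) := by
  set w : ℂ := (r : ℂ) * Complex.exp ((θ : ℂ) * Complex.I) with hw
  have hwre : w.re = r * Real.cos θ := by
    rw [hw, Complex.mul_re, Complex.ofReal_re, Complex.ofReal_im,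
      Complex.exp_ofReal_mul_I_re]
    simp
  have hwim : w.im = r * Real.sin θ := by
    rw [hw, Complex.mul_im, Complex.ofReal_re, Complex.ofReal_im,
      Complex.exp_ofReal_mul_I_im]
    simp
  have hwn : Complex.normSq w = r ^ 2 := by
    rw [hw, Complex.normSq_mul, Complex.normSq_eq_norm_sq, Complex.normSq_eq_norm_sq,
      Complex.norm_exp_ofReal_mul_I, Complex.norm_real]
    simp [sq_abs]
  have hpt : ∀ i, Complex.normSq (a i + w * b i)
      = Complex.normSq (a i) + r ^ 2 * Complex.normSq (b i)
        + ((2 * r * (a i * (starRingEnd ℂ) (b i)).re) * Real.cos θ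
            + (2 * r * (a i * (starRingEnd ℂ) (b i)).im) * Real.sin θ) := by
    intro i
    rw [Complex.normSq_add, Complex.normSq_mul, hwn]
    have hcross : a i * (starRingEnd ℂ) (w * b i) = (a i * (starRingEnd ℂ) (b i)) * (starRingEnd ℂ) w := by
      rw [map_mul]; ring
    rw [hcross]
    rw [Complex.mul_re, Complex.conj_re, Complex.conj_im, hwre, hwim]
    ring
  calc (∑ i, Complex.normSq ((a + w • b) i))
      = ∑ i, (Complex.normSq (a i) + r ^ 2 * Complex.normSq (b i)
        + ((2 * r * (a i * (starRingEnd ℂ) (b i)).re) * Real.cos θ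
            + (2 * r * (a i * (starRingEnd ℂ) (b i)).im) * Real.sin θ)) := by
        refine Finset.sum_congr rfl fun i _ => ?_
        rw [Pi.add_apply, Pi.smul_apply, smul_eq_mul]
        exact hpt i
    _ = _ := by
        have e2 : ∑ i, (2 * r * (a i * (starRingEnd ℂ) (b i)).re) * Real.cos θ
            = (2 * r * (∑ i, (a i * (starRingEnd ℂ) (b i))).re) * Real.cos θ := by
          rw [← Finset.sum_mul, ← Finset.mul_sum, ← Complex.re_sum]
        have e3 : ∑ i, (2 * r * (a i * (starRingEnd ℂ) (b i)).im) * Real.sin θ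
            = (2 * r * (∑ i, (a i * (starRingEnd ℂ) (b i))).im) * Real.sin θ := by
          rw [← Finset.sum_mul, ← Finset.mul_sum, ← Complex.im_sum]
        rw [Finset.sum_add_distrib, Finset.sum_add_distrib, Finset.sum_add_distrib,
          ← Finset.mul_sum, e2, e3]

/-- adding a continuous real function preserves upper semicontinuity (EReal values) -/
lemma usc_add_continuous {α : Type*} [TopologicalSpace α] {f : α → EReal} {g : α → ℝ}
    (hf : UpperSemicontinuous f) (hg : Continuous g) :
    UpperSemicontinuous fun x => f x + (g x : EReal) := by
  intro x y hy
  have hy' : f x + (g x : EReal) < y := hy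
  rcases eq_or_ne (f x) ⊤ with htop | htop
  · rw [htop, EReal.top_add_coe] at hy'
    exact absurd hy' not_top_lt
  · -- f x < ⊤
    have h1 : f x < y + ((-(g x) : ℝ) : EReal) := by
      have h0 := EReal.add_lt_add_right_coe hy' (-(g x))
      rwa [EReal.add_coe_neg_cancel (f x) (g x)] at h0
    obtain ⟨z, hz1, hz2⟩ := EReal.exists_between_coe_real h1
    have h2 : ((z + g x : ℝ) : EReal) < y := by
      have h0 := EReal.add_lt_add_right_coe hz2 (g x)
      have h5 := EReal.add_coe_neg_cancel y (-(g x))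
      rw [neg_neg] at h5
      rw [h5] at h0
      exact_mod_cast h0
    obtain ⟨w, hw1, hw2⟩ := EReal.exists_between_coe_real h2
    set δ : ℝ := w - (z + g x) with hδ
    have hδpos : 0 < δ := by
      have : (z + g x : ℝ) < w := by exact_mod_cast hw1
      linarith
    have ev1 : ∀ᶠ x' in nhds x, f x' < (z : EReal) := hf x _ hz1
    have ev2 : ∀ᶠ x' in nhds x, g x' < g x + δ := by
      have : Filter.Tendsto g (nhds x) (nhds (g x)) := (hg.tendsto x)
      exact this.eventually_lt_const (by linarith)
    have hzw : z + (g x + δ) = w := by rw [hδ]; ring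
    filter_upwards [ev1, ev2] with x' h1' h2'
    show f x' + (g x' : EReal) < y
    calc f x' + (g x' : EReal) < (z : EReal) + ((g x + δ : ℝ) : EReal) :=
          EReal.add_lt_add h1' (by exact_mod_cast h2')
      _ = ((z + (g x + δ) : ℝ) : EReal) := by norm_cast
      _ = (w : EReal) := by rw [hzw]
      _ < y := hw2
lemma circlemap_continuous {n : ℕ} (s b : Fin n → ℂ) (r : ℝ) :
    Continuous fun θ : ℝ => s + (((r : ℂ) * Complex.exp ((θ : ℂ) * Complex.I)) • b) :=
  continuous_const.add ((continuous_const.mul (Complex.continuous_exp.comp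
    (Complex.continuous_ofReal.mul continuous_const))).smul continuous_const)

lemma qsum_continuous {n : ℕ} (ε : ℝ) :
    Continuous fun z : Fin n → ℂ => ε * ∑ i, Complex.normSq (z i) :=
  continuous_const.mul (continuous_finset_sum _ fun i _ =>
    Complex.continuous_normSq.comp (continuous_apply i))

lemma isPSHOn_zero_quadratic {n : ℕ} {ε : ℝ} (hε : 0 ≤ ε) :
    IsPSHOn Set.univ
      (fun z : Fin n → ℂ =>
        (fun _ : Fin n → ℂ => (0 : EReal)) z
          + ((ε * ∑ i, Complex.normSq (z i) : ℝ) : EReal)) := by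
  constructor
  · exact (usc_add_continuous upperSemicontinuous_const
      (qsum_continuous ε)).upperSemicontinuousOn _
  · intro a _ b r hr _
    set qa := ∑ i, Complex.normSq (a i) with hqa
    set qb := ∑ i, Complex.normSq (b i) with hqb
    set A := ∑ i, (a i * (starRingEnd ℂ) (b i)) with hA
    set c₀ := ε * (qa + r ^ 2 * qb) with hc₀
    set α := ε * (2 * r * A.re) with hα
    set β := ε * (2 * r * A.im) with hβ
    show (0 : EReal) + ((ε * qa : ℝ) : EReal)
        ≤ circleMean fun θ : ℝ => (0 : EReal)
            + ((ε * ∑ i, Complex.normSq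
                ((a + (((r : ℂ) * Complex.exp ((θ : ℂ) * Complex.I)) • b)) i) : ℝ) : EReal)
    have hfun : (fun θ : ℝ => (0 : EReal)
            + ((ε * ∑ i, Complex.normSq
                ((a + (((r : ℂ) * Complex.exp ((θ : ℂ) * Complex.I)) • b)) i) : ℝ) : EReal))
        = fun θ : ℝ => (fun _ : ℝ => (0 : EReal)) θ
            + ((c₀ + (α * Real.cos θ + β * Real.sin θ) : ℝ) : EReal) := by
      funext θ
      have he : ε * ∑ i, Complex.normSq
            ((a + (((r : ℂ) * Complex.exp ((θ : ℂ) * Complex.I)) • b)) i)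
          = c₀ + (α * Real.cos θ + β * Real.sin θ) := by
        rw [sum_normSq_circle a b r θ, hc₀, hα, hβ, hA, hqa, hqb]
        ring
      rw [he]
    rw [hfun, circleMean_trig c₀ α β measurable_const, circleMean_zero, zero_add, zero_add]
    have : ε * qa ≤ c₀ := by
      rw [hc₀]
      have hqbnn : 0 ≤ qb := Finset.sum_nonneg fun i _ => Complex.normSq_nonneg _
      nlinarith [mul_nonneg hε (mul_nonneg (sq_nonneg r) hqbnn)]
    exact_mod_cast this

lemma isPSHOn_translate {n : ℕ} {ψ : (Fin n → ℂ) → EReal} {ε : ℝ}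
    (hψm : Measurable ψ) (husc : UpperSemicontinuous ψ)
    (hpsh : IsPSHOn Set.univ
      (fun z => ψ z + ((ε * ∑ i, Complex.normSq (z i) : ℝ) : EReal)))
    (t : Fin n → ℂ) :
    IsPSHOn Set.univ
      (fun z => ψ (z - t) + ((ε * ∑ i, Complex.normSq (z i) : ℝ) : EReal)) := by
  have husct : UpperSemicontinuous fun z : Fin n → ℂ => ψ (z - t) := by
    intro x y hy
    exact ((continuous_id.sub continuous_const).tendsto x).eventually (husc (x - t) y hy)
  constructor
  · exact (usc_add_continuous husct (qsum_continuous ε)).upperSemicontinuousOn _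
  · intro a _ b r hr _
    set s := a - t with hsdef
    have hs := hpsh.2 s (Set.mem_univ _) b r hr (fun _ _ => Set.mem_univ _)
    set qa := ∑ i, Complex.normSq (a i) with hqa
    set qs := ∑ i, Complex.normSq (s i) with hqs
    set A := ∑ i, (a i * (starRingEnd ℂ) (b i)) with hA
    set S := ∑ i, (s i * (starRingEnd ℂ) (b i)) with hS
    set c₀ := ε * (qa - qs) with hc₀
    set α := ε * (2 * r * (A.re - S.re)) with hα
    set β := ε * (2 * r * (A.im - S.im)) with hβ
    have hfmeas : Measurable fun θ : ℝ =>
        ψ (s + (((r : ℂ) * Complex.exp ((θ : ℂ) * Complex.I)) • b))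
          + ((ε * ∑ i, Complex.normSq
              ((s + (((r : ℂ) * Complex.exp ((θ : ℂ) * Complex.I)) • b)) i) : ℝ) : EReal) :=
      measurable_add_real (hψm.comp (circlemap_continuous s b r).measurable)
        ((qsum_continuous ε).comp (circlemap_continuous s b r)).measurable
    show ψ (a - t) + ((ε * qa : ℝ) : EReal)
        ≤ circleMean fun θ : ℝ =>
            ψ ((a + (((r : ℂ) * Complex.exp ((θ : ℂ) * Complex.I)) • b)) - t)
              + ((ε * ∑ i, Complex.normSq
                  ((a + (((r : ℂ) * Complex.exp ((θ : ℂ) * Complex.I)) • b)) i) : ℝ) : EReal)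
    have hfun : (fun θ : ℝ =>
            ψ ((a + (((r : ℂ) * Complex.exp ((θ : ℂ) * Complex.I)) • b)) - t)
              + ((ε * ∑ i, Complex.normSq
                  ((a + (((r : ℂ) * Complex.exp ((θ : ℂ) * Complex.I)) • b)) i) : ℝ) : EReal))
        = fun θ : ℝ =>
            (ψ (s + (((r : ℂ) * Complex.exp ((θ : ℂ) * Complex.I)) • b))
              + ((ε * ∑ i, Complex.normSq
                  ((s + (((r : ℂ) * Complex.exp ((θ : ℂ) * Complex.I)) • b)) i) : ℝ) : EReal))
            + ((c₀ + (α * Real.cos θ + β * Real.sin θ) : ℝ) : EReal) := by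
      funext θ
      have h1 : (a + (((r : ℂ) * Complex.exp ((θ : ℂ) * Complex.I)) • b)) - t
          = s + (((r : ℂ) * Complex.exp ((θ : ℂ) * Complex.I)) • b) := by
        rw [hsdef, add_sub_right_comm]
      have h2 : ε * ∑ i, Complex.normSq
            ((a + (((r : ℂ) * Complex.exp ((θ : ℂ) * Complex.I)) • b)) i)
          = ε * (∑ i, Complex.normSq
              ((s + (((r : ℂ) * Complex.exp ((θ : ℂ) * Complex.I)) • b)) i))
            + (c₀ + (α * Real.cos θ + β * Real.sin θ)) := by
        rw [sum_normSq_circle a b r θ, sum_normSq_circle s b r θ, hc₀, hα, hβ, hA, hS,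
          hqa, hqs]
        ring
      rw [h1, h2, EReal.coe_add, ← add_assoc]
    rw [hfun, circleMean_trig c₀ α β hfmeas]
    have h4 : (ε * qa : ℝ) = ε * qs + c₀ := by rw [hc₀]; ring
    have h3 : ψ (a - t) + ((ε * qa : ℝ) : EReal)
        = (ψ s + ((ε * qs : ℝ) : EReal)) + (c₀ : EReal) := by
      rw [h4, EReal.coe_add, ← add_assoc]
    rw [h3]
    exact add_le_add_left hs _
def latticeBasis (n : ℕ) : Module.Basis ((_ : Fin n) × Fin 2) ℝ (Fin n → ℂ) :=
  Pi.basis fun _ => Complex.basisOneI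

lemma basisOneI_repr_apply (w : ℂ) (j : Fin 2) :
    Complex.basisOneI.repr w j = ![w.re, w.im] j :=
  congrFun (Complex.coe_basisOneI_repr w) j

lemma fundDomain_eq (n : ℕ) : fundDomain n = ZSpan.fundamentalDomain (latticeBasis n) := by
  ext z
  simp only [fundDomain, Set.mem_setOf_eq, ZSpan.mem_fundamentalDomain, latticeBasis,
    Pi.basis_repr]
  constructor
  · rintro h ⟨i, j⟩
    fin_cases j
    · simpa [basisOneI_repr_apply] using (h i).1
    · simpa [basisOneI_repr_apply] using (h i).2
  · intro h i
    exact ⟨by simpa [basisOneI_repr_apply] using h ⟨i, 0⟩,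
      by simpa [basisOneI_repr_apply] using h ⟨i, 1⟩⟩

lemma fundDomain_measurableSet (n : ℕ) : MeasurableSet (fundDomain n) := by
  rw [fundDomain_eq]
  exact ZSpan.fundamentalDomain_measurableSet _

lemma volume_fundDomain (n : ℕ) : volume (fundDomain n) = 1 := by
  have h1 : fundDomain n
      = Set.pi Set.univ (fun _ : Fin n => {w : ℂ | w.re ∈ Set.Ico (0:ℝ) 1 ∧ w.im ∈ Set.Ico (0:ℝ) 1}) := by
    ext z
    simp [fundDomain, Set.mem_pi]
  have hQ : volume {w : ℂ | w.re ∈ Set.Ico (0:ℝ) 1 ∧ w.im ∈ Set.Ico (0:ℝ) 1} = 1 := by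
    have h2 : {w : ℂ | w.re ∈ Set.Ico (0:ℝ) 1 ∧ w.im ∈ Set.Ico (0:ℝ) 1}
        = Complex.measurableEquivRealProd ⁻¹' ((Set.Ico (0:ℝ) 1) ×ˢ (Set.Ico (0:ℝ) 1)) := by
      ext w
      simp [Set.mem_prod]
    rw [h2, Complex.volume_preserving_equiv_real_prod.measure_preimage
      ((measurableSet_Ico.prod measurableSet_Ico).nullMeasurableSet)]
    rw [Measure.volume_eq_prod, Measure.prod_prod]
    simp [Real.volume_Ico]
  rw [h1, volume_pi_pi]
  simp only [hQ]
  exact Finset.prod_const_one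

/-- The additive subgroup of periods of `ψ`. -/
def perSubgroup {n : ℕ} (ψ : (Fin n → ℂ) → EReal) : AddSubgroup (Fin n → ℂ) where
  carrier := {γ | ∀ z, ψ (z + γ) = ψ z}
  zero_mem' := by intro z; simp
  add_mem' := by
    intro γ₁ γ₂ h1 h2 z
    rw [← add_assoc, h2, h1]
  neg_mem' := by
    intro γ h z
    have h2 := h (z + -γ)
    rw [add_assoc, neg_add_cancel, add_zero] at h2
    exact h2.symm

lemma lambdaPeriodic_subgroup {n : ℕ} {ψ : (Fin n → ℂ) → EReal} (hper : LambdaPeriodic ψ) :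
    ∀ γ ∈ (Submodule.span ℤ (Set.range ⇑(latticeBasis n))).toAddSubgroup,
      ∀ z, ψ (z + γ) = ψ z := by
  have hsingle1 : ∀ i : Fin n, ∀ z, ψ (z + Pi.single i (1 : ℂ)) = ψ z := by
    intro i z
    have h := hper z (Pi.single i 1) 0
    have he : (fun j => z j + (((Pi.single i 1 : Fin n → ℤ) j : ℤ) : ℂ)
        + (((0 : Fin n → ℤ) j : ℤ) : ℂ) * Complex.I) = z + Pi.single i (1 : ℂ) := by
      funext j
      by_cases hj : j = i
      · subst hj; simp
      · simp [Pi.single_apply, hj]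
    exact (congrArg ψ he.symm).trans h
  have hsingleI : ∀ i : Fin n, ∀ z, ψ (z + Pi.single i (Complex.I)) = ψ z := by
    intro i z
    have h := hper z 0 (Pi.single i 1)
    have he : (fun j => z j + (((0 : Fin n → ℤ) j : ℤ) : ℂ)
        + (((Pi.single i 1 : Fin n → ℤ) j : ℤ) : ℂ) * Complex.I) = z + Pi.single i Complex.I := by
      funext j
      by_cases hj : j = i
      · subst hj; simp
      · simp [Pi.single_apply, hj]
    exact (congrArg ψ he.symm).trans h
  have hle : Submodule.span ℤ (Set.range ⇑(latticeBasis n))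
      ≤ AddSubgroup.toIntSubmodule (perSubgroup ψ) := by
    rw [Submodule.span_le]
    rintro _ ⟨⟨i, j⟩, rfl⟩
    fin_cases j
    · show latticeBasis n ⟨i, 0⟩ ∈ _
      have hb : latticeBasis n ⟨i, 0⟩ = Pi.single i (1 : ℂ) := by
        simp [latticeBasis, Pi.basis_apply]
      rw [hb]
      exact fun z => hsingle1 i z
    · show latticeBasis n ⟨i, 1⟩ ∈ _
      have hb : latticeBasis n ⟨i, 1⟩ = Pi.single i (Complex.I) := by
        simp [latticeBasis, Pi.basis_apply]
      rw [hb]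
      exact fun z => hsingleI i z
  intro γ hγ z
  exact hle hγ z

lemma setLIntegral_translate {n : ℕ} {ψ : (Fin n → ℂ) → EReal} (hper : LambdaPeriodic ψ)
    (t : Fin n → ℂ) :
    ∫⁻ z in (fun z => z + t) ⁻¹' (fundDomain n), EReal.exp (ψ z)
      = ∫⁻ z in fundDomain n, EReal.exp (ψ z) := by
  set Γ := (Submodule.span ℤ (Set.range ⇑(latticeBasis n))).toAddSubgroup with hΓ
  haveI : Countable Γ :=
    inferInstanceAs (Countable (Submodule.span ℤ (Set.range ⇑(latticeBasis n))))
  have hD : MeasureTheory.IsAddFundamentalDomain Γ (fundDomain n) volume := by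
    rw [fundDomain_eq]
    exact ZSpan.isAddFundamentalDomain' _ _
  have hDt : MeasureTheory.IsAddFundamentalDomain Γ ((fun z => z + t) ⁻¹' fundDomain n)
      volume := by
    refine hD.preimage_of_equiv (f := fun z => z + t)
      (measurePreserving_add_right volume t).quasiMeasurePreserving
      (e := id) Function.bijective_id ?_
    intro g x
    show (g +ᵥ x) + t = g +ᵥ (x + t)
    show ((g : Fin n → ℂ) + x) + t = (g : Fin n → ℂ) + (x + t)
    rw [add_assoc]
  refine hDt.setLIntegral_eq hD (fun z => EReal.exp (ψ z)) ?_
  intro γ x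
  have : (γ : Fin n → ℂ) + x = x + (γ : Fin n → ℂ) := add_comm _ _
  show EReal.exp (ψ ((γ : Fin n → ℂ) + x)) = EReal.exp (ψ x)
  rw [this, lambdaPeriodic_subgroup hper γ γ.2 x]

lemma lintegral_fundDomain_translate {n : ℕ} {ψ : (Fin n → ℂ) → EReal}
    (hper : LambdaPeriodic ψ) (hψm : Measurable ψ) (t : Fin n → ℂ) :
    ∫⁻ z in fundDomain n, EReal.exp (ψ (z - t))
      = ∫⁻ z in fundDomain n, EReal.exp (ψ z) := by
  have hmp : MeasurePreserving (fun z : Fin n → ℂ => z + t) volume volume :=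
    measurePreserving_add_right volume t
  have hf : Measurable fun z : Fin n → ℂ => EReal.exp (ψ (z - t)) :=
    (EReal.exp_monotone.measurable).comp (hψm.comp
      ((continuous_id.sub continuous_const).measurable))
  have h1 := hmp.setLIntegral_comp_preimage (fundDomain_measurableSet n) hf
  rw [← h1]
  have h2 : ∀ y : Fin n → ℂ, EReal.exp (ψ ((y + t) - t)) = EReal.exp (ψ y) := by
    intro y
    rw [add_sub_cancel_right]
  calc ∫⁻ y in (fun z => z + t) ⁻¹' fundDomain n, EReal.exp (ψ ((y + t) - t))
      = ∫⁻ y in (fun z => z + t) ⁻¹' fundDomain n, EReal.exp (ψ y) :=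
        lintegral_congr fun y => h2 y
    _ = ∫⁻ z in fundDomain n, EReal.exp (ψ z) := setLIntegral_translate hper t

lemma Aset_translate {n : ℕ} {ε : ℝ} (t : Fin n → ℂ) {ψ : (Fin n → ℂ) → EReal}
    (hψ : ψ ∈ Aset n ε) : (fun z => ψ (z - t)) ∈ Aset n ε := by
  obtain ⟨hper, husc, hpsh, hnorm⟩ := hψ
  have hψm : Measurable ψ := husc.measurable
  refine ⟨?_, ?_, isPSHOn_translate hψm husc hpsh t, ?_⟩
  · intro z k l
    show ψ ((fun i => z i + (k i : ℂ) + (l i : ℂ) * Complex.I) - t) = ψ (z - t)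
    have he : (fun i => z i + (k i : ℂ) + (l i : ℂ) * Complex.I) - t
        = fun i => (z - t) i + (k i : ℂ) + (l i : ℂ) * Complex.I := by
      funext i
      simp only [Pi.sub_apply]
      ring
    rw [he]
    exact hper (z - t) k l
  · intro x y hy
    exact ((continuous_id.sub continuous_const).tendsto x).eventually (husc (x - t) y hy)
  · show ∫⁻ z in fundDomain n, EReal.exp (ψ (z - t)) = 1
    rw [lintegral_fundDomain_translate hper hψm t]
    exact hnorm

lemma dVeps_const {n : ℕ} {ε : ℝ} (x y : Fin n → ℂ) : dVeps n ε x = dVeps n ε y := by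
  suffices h : ∀ x y : Fin n → ℂ, dVeps n ε x ≤ dVeps n ε y from le_antisymm (h x y) (h y x)
  intro x y
  refine iSup₂_le fun ψ hψ => ?_
  have h1 : (fun z => ψ (z - (y - x))) ∈ Aset n ε := Aset_translate _ hψ
  have h2 : EReal.exp (ψ x) = EReal.exp ((fun z => ψ (z - (y - x))) y) := by
    show EReal.exp (ψ x) = EReal.exp (ψ (y - (y - x)))
    rw [sub_sub_cancel]
  rw [h2]
  exact le_iSup₂ (f := fun ψ (_ : ψ ∈ Aset n ε) => EReal.exp (ψ y)) _ h1

lemma Aset_zero_mem {n : ℕ} {ε : ℝ} (hε : 0 ≤ ε) :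
    (fun _ : Fin n → ℂ => (0 : EReal)) ∈ Aset n ε := by
  refine ⟨fun z k l => rfl, upperSemicontinuous_const, isPSHOn_zero_quadratic hε, ?_⟩
  show ∫⁻ _ in fundDomain n, EReal.exp (0 : EReal) = 1
  rw [EReal.exp_zero, setLIntegral_one, volume_fundDomain]
lemma openPolydisk_eq (n : ℕ) :
    openPolydisk n = Set.pi Set.univ fun _ : Fin n => Metric.ball (0 : ℂ) 1 := by
  ext z
  simp [openPolydisk, Set.mem_pi, mem_ball_zero_iff]

lemma openPolydisk_isOpen (n : ℕ) : IsOpen (openPolydisk n) := by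
  rw [openPolydisk_eq]
  exact isOpen_set_pi Set.finite_univ fun _ _ => Metric.isOpen_ball

lemma openPolydisk_measurableSet (n : ℕ) : MeasurableSet (openPolydisk n) :=
  (openPolydisk_isOpen n).measurableSet

lemma openPolydisk_volume_pos (n : ℕ) : 0 < volume (openPolydisk n) :=
  (openPolydisk_isOpen n).measure_pos volume ⟨0, fun i => by simp⟩

lemma openPolydisk_volume_ne_top (n : ℕ) : volume (openPolydisk n) ≠ ⊤ := by
  rw [openPolydisk_eq, volume_pi_pi]
  exact (ENNReal.prod_lt_top fun i _ => measure_ball_lt_top).ne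

lemma complex_mul_measurePreserving (w : ℂ) (hw : Complex.normSq w = 1) :
    MeasurePreserving (fun z : ℂ => w * z) volume volume := by
  have hL : (fun z : ℂ => w * z) = ⇑((Algebra.lmul ℝ ℂ) w) := by
    funext z
    simp [Algebra.lmul]
  have hdet : LinearMap.det ((Algebra.lmul ℝ ℂ) w) = 1 := by
    rw [← Algebra.norm_apply, Algebra.norm_complex_apply, hw]
  refine ⟨(continuous_const.mul continuous_id).measurable, ?_⟩
  have hmap := Measure.map_linearMap_addHaar_eq_smul_addHaar (volume : Measure ℂ)
    (f := (Algebra.lmul ℝ ℂ) w) (by rw [hdet]; norm_num)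
  rw [hdet] at hmap
  rw [hL, hmap]
  simp

lemma rotation_measurePreserving {n : ℕ} (θ : ℝ) :
    MeasurePreserving (fun z : Fin n → ℂ => Complex.exp ((θ : ℂ) * Complex.I) • z)
      volume volume := by
  have h1 : Complex.normSq (Complex.exp ((θ : ℂ) * Complex.I)) = 1 := by
    rw [Complex.normSq_eq_norm_sq, Complex.norm_exp_ofReal_mul_I]
    norm_num
  have h2 := measurePreserving_pi (fun _ : Fin n => (volume : Measure ℂ))
    (fun _ => (volume : Measure ℂ)) (fun _ => complex_mul_measurePreserving _ h1)
  rw [← volume_pi] at h2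
  have h3 : (fun (a : Fin n → ℂ) (i : Fin n) => Complex.exp ((θ : ℂ) * Complex.I) * a i)
      = fun z : Fin n → ℂ => Complex.exp ((θ : ℂ) * Complex.I) • z := by
    funext z i
    rw [Pi.smul_apply, smul_eq_mul]
  rwa [h3] at h2

lemma rotation_preimage_polydisk {n : ℕ} (θ : ℝ) :
    (fun z : Fin n → ℂ => Complex.exp ((θ : ℂ) * Complex.I) • z) ⁻¹' openPolydisk n
      = openPolydisk n := by
  ext z
  simp only [openPolydisk, Set.mem_preimage, Set.mem_setOf_eq, Pi.smul_apply, smul_eq_mul,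
    norm_mul, Complex.norm_exp_ofReal_mul_I, one_mul]

lemma dVeps_one_bound {n : ℕ} {ψ : (Fin n → ℂ) → EReal} (hψ : ψ ∈ Aset n 1) :
    EReal.exp (ψ 0) ≤ (volume (openPolydisk n))⁻¹ * (ENNReal.ofReal (Real.exp n)
      * (Fintype.card ((Fin n → Bool) × (Fin n → Bool)) : ℝ≥0∞)) := by
  obtain ⟨hper, husc, hpsh, hnorm⟩ := hψ
  have hψm : Measurable ψ := husc.measurable
  set u : (Fin n → ℂ) → EReal :=
    fun z => ψ z + ((1 * ∑ i, Complex.normSq (z i) : ℝ) : EReal) with hu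
  have hum : Measurable u := measurable_add_real hψm (qsum_continuous 1).measurable
  set F : (Fin n → ℂ) → ℝ≥0∞ := fun z => EReal.exp (u z) with hF
  have hFmeas : Measurable F := (EReal.exp_monotone.measurable).comp hum
  have hu0 : u 0 = ψ 0 := by
    rw [hu]
    simp
  -- step 1 : circle bound
  have hb : ∀ b : Fin n → ℂ, EReal.exp (ψ 0) ≤ ENNReal.ofReal ((2 * Real.pi)⁻¹)
      * ∫⁻ θ in Set.Ioc (0 : ℝ) (2 * Real.pi),
          F (Complex.exp ((θ : ℂ) * Complex.I) • b) := by
    intro b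
    have hps := hpsh.2 0 (Set.mem_univ _) b 1 one_pos (fun _ _ => Set.mem_univ _)
    have hps' : u 0 ≤ circleMean fun θ : ℝ =>
        u (0 + ((((1:ℝ) : ℂ) * Complex.exp ((θ : ℂ) * Complex.I)) • b)) := hps
    have hfm : Measurable fun θ : ℝ =>
        u (0 + ((((1:ℝ) : ℂ) * Complex.exp ((θ : ℂ) * Complex.I)) • b)) :=
      hum.comp (circlemap_continuous 0 b 1).measurable
    have hj := exp_circleMean_le hfm
    have hmono := EReal.exp_le_exp_iff.mpr hps'
    have hsimp : ∀ θ : ℝ, EReal.exp (u (0 + ((((1:ℝ) : ℂ) * Complex.exp ((θ : ℂ)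
        * Complex.I)) • b))) = F (Complex.exp ((θ : ℂ) * Complex.I) • b) := by
      intro θ
      rw [hF]
      congr 1
      rw [zero_add, Complex.ofReal_one, one_mul]
    calc EReal.exp (ψ 0) = EReal.exp (u 0) := by rw [hu0]
      _ ≤ EReal.exp (circleMean fun θ : ℝ =>
            u (0 + ((((1:ℝ) : ℂ) * Complex.exp ((θ : ℂ) * Complex.I)) • b))) := hmono
      _ ≤ ENNReal.ofReal ((2 * Real.pi)⁻¹) * ∫⁻ θ in Set.Ioc (0 : ℝ) (2 * Real.pi),
            EReal.exp (u (0 + ((((1:ℝ) : ℂ) * Complex.exp ((θ : ℂ) * Complex.I)) • b))) := hj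
      _ = ENNReal.ofReal ((2 * Real.pi)⁻¹) * ∫⁻ θ in Set.Ioc (0 : ℝ) (2 * Real.pi),
            F (Complex.exp ((θ : ℂ) * Complex.I) • b) := by
          congr 1
          exact lintegral_congr fun θ => hsimp θ
  -- step 2 : average over the polydisk
  have hcont2 : Continuous fun p : (Fin n → ℂ) × ℝ =>
      Complex.exp ((p.2 : ℂ) * Complex.I) • p.1 :=
    ((Complex.continuous_exp.comp ((Complex.continuous_ofReal.comp continuous_snd).mul
      continuous_const))).smul continuous_fst
  have hkey1 : volume (openPolydisk n) * EReal.exp (ψ 0) ≤ ∫⁻ z in openPolydisk n, F z := by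
    have s1 : volume (openPolydisk n) * EReal.exp (ψ 0)
        = ∫⁻ _ in openPolydisk n, EReal.exp (ψ 0) := by
      rw [setLIntegral_const, mul_comm]
    have s2 : (∫⁻ b in openPolydisk n, (ENNReal.ofReal ((2 * Real.pi)⁻¹)
        * ∫⁻ θ in Set.Ioc (0 : ℝ) (2 * Real.pi),
          F (Complex.exp ((θ : ℂ) * Complex.I) • b)))
        = ENNReal.ofReal ((2 * Real.pi)⁻¹) * ∫⁻ b in openPolydisk n,
          ∫⁻ θ in Set.Ioc (0 : ℝ) (2 * Real.pi),
            F (Complex.exp ((θ : ℂ) * Complex.I) • b) :=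
      lintegral_const_mul' _ _ ENNReal.ofReal_ne_top
    have s3 : (∫⁻ b in openPolydisk n, ∫⁻ θ in Set.Ioc (0 : ℝ) (2 * Real.pi),
          F (Complex.exp ((θ : ℂ) * Complex.I) • b))
        = ∫⁻ θ in Set.Ioc (0 : ℝ) (2 * Real.pi), ∫⁻ b in openPolydisk n,
            F (Complex.exp ((θ : ℂ) * Complex.I) • b) := by
      apply lintegral_lintegral_swap
      exact ((hFmeas.comp hcont2.measurable).aemeasurable)
    have s4 : ∀ θ : ℝ, (∫⁻ b in openPolydisk n,
        F (Complex.exp ((θ : ℂ) * Complex.I) • b)) = ∫⁻ z in openPolydisk n, F z := by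
      intro θ
      have := (rotation_measurePreserving (n := n) θ).setLIntegral_comp_preimage
        (openPolydisk_measurableSet n) hFmeas
      rwa [rotation_preimage_polydisk] at this
    have s5 : (∫⁻ θ in Set.Ioc (0 : ℝ) (2 * Real.pi), ∫⁻ b in openPolydisk n,
          F (Complex.exp ((θ : ℂ) * Complex.I) • b))
        = (∫⁻ z in openPolydisk n, F z) * ENNReal.ofReal (2 * Real.pi) := by
      rw [lintegral_congr fun θ => rfl]
      calc (∫⁻ θ in Set.Ioc (0 : ℝ) (2 * Real.pi), ∫⁻ b in openPolydisk n,
            F (Complex.exp ((θ : ℂ) * Complex.I) • b))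
          = ∫⁻ _ in Set.Ioc (0 : ℝ) (2 * Real.pi), (∫⁻ z in openPolydisk n, F z) := by
            exact lintegral_congr fun θ => s4 θ
        _ = (∫⁻ z in openPolydisk n, F z) * ENNReal.ofReal (2 * Real.pi) := by
            rw [setLIntegral_const, Real.volume_Ioc]
            norm_num
    calc volume (openPolydisk n) * EReal.exp (ψ 0)
        = ∫⁻ _ in openPolydisk n, EReal.exp (ψ 0) := s1
      _ ≤ ∫⁻ b in openPolydisk n, (ENNReal.ofReal ((2 * Real.pi)⁻¹)
            * ∫⁻ θ in Set.Ioc (0 : ℝ) (2 * Real.pi),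
              F (Complex.exp ((θ : ℂ) * Complex.I) • b)) := lintegral_mono fun b => hb b
      _ = ENNReal.ofReal ((2 * Real.pi)⁻¹) * ((∫⁻ z in openPolydisk n, F z)
            * ENNReal.ofReal (2 * Real.pi)) := by rw [s2, s3, s5]
      _ = ∫⁻ z in openPolydisk n, F z := by
          rw [mul_comm (∫⁻ z in openPolydisk n, F z) _, ← mul_assoc,
            ENNReal.ofReal_inv_of_pos two_pi_pos, ENNReal.inv_mul_cancel
              (by rw [ne_eq, ENNReal.ofReal_eq_zero, not_le]; exact two_pi_pos)
              ENNReal.ofReal_ne_top, one_mul]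
  -- step 3 : bound F on the polydisk
  have hexppsi : Measurable fun z => EReal.exp (ψ z) :=
    (EReal.exp_monotone.measurable).comp hψm
  have hkey2 : (∫⁻ z in openPolydisk n, F z)
      ≤ (∫⁻ z in openPolydisk n, EReal.exp (ψ z)) * ENNReal.ofReal (Real.exp n) := by
    have hpt : ∀ z ∈ openPolydisk n, F z ≤ EReal.exp (ψ z) * ENNReal.ofReal (Real.exp n) := by
      intro z hz
      show EReal.exp (ψ z + ((1 * ∑ i, Complex.normSq (z i) : ℝ) : EReal))
          ≤ EReal.exp (ψ z) * ENNReal.ofReal (Real.exp n)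
      rw [EReal.exp_add, EReal.exp_coe]
      refine mul_le_mul_right (ENNReal.ofReal_le_ofReal (Real.exp_le_exp.mpr ?_)) _
      rw [one_mul]
      have hle1 : ∀ i, Complex.normSq (z i) ≤ 1 := by
        intro i
        rw [Complex.normSq_eq_norm_sq]
        have := le_of_lt (hz i)
        nlinarith [norm_nonneg (z i)]
      calc ∑ i, Complex.normSq (z i) ≤ (Finset.univ : Finset (Fin n)).card • (1 : ℝ) :=
            Finset.sum_le_card_nsmul _ _ _ fun i _ => hle1 i
        _ = n := by simp
    calc (∫⁻ z in openPolydisk n, F z)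
        ≤ ∫⁻ z in openPolydisk n, EReal.exp (ψ z) * ENNReal.ofReal (Real.exp n) :=
          setLIntegral_mono (hexppsi.mul_const _) hpt
      _ = (∫⁻ z in openPolydisk n, EReal.exp (ψ z)) * ENNReal.ofReal (Real.exp n) :=
          lintegral_mul_const' _ _ ENNReal.ofReal_ne_top
  -- step 4 : covering bound
  have hkey3 : (∫⁻ z in openPolydisk n, EReal.exp (ψ z))
      ≤ (Fintype.card ((Fin n → Bool) × (Fin n → Bool)) : ℝ≥0∞) := by
    set tv : (Fin n → Bool) × (Fin n → Bool) → (Fin n → ℂ) :=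
      fun v i => ((if v.1 i then (1:ℝ) else 0 : ℝ) : ℂ)
        + ((if v.2 i then (1:ℝ) else 0 : ℝ) : ℂ) * Complex.I with htv
    have hcover : openPolydisk n
        ⊆ ⋃ v : (Fin n → Bool) × (Fin n → Bool), (fun z => z + tv v) ⁻¹' fundDomain n := by
      intro z hz
      rw [Set.mem_iUnion]
      refine ⟨(fun i => decide ((z i).re < 0), fun i => decide ((z i).im < 0)), ?_⟩
      intro i
      have habs := hz i
      have hre : |(z i).re| < 1 := lt_of_le_of_lt (Complex.abs_re_le_norm _) habs
      have him : |(z i).im| < 1 := lt_of_le_of_lt (Complex.abs_im_le_norm _) habs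
      rw [abs_lt] at hre him
      obtain ⟨hre1, hre2⟩ := hre
      obtain ⟨him1, him2⟩ := him
      constructor
      · have : ((z + tv ((fun i => decide ((z i).re < 0), fun i => decide ((z i).im < 0)))) i).re
            = (z i).re + (if decide ((z i).re < 0) then (1:ℝ) else 0) := by
          simp [htv, Complex.add_re]
        rw [this]
        by_cases hneg : (z i).re < 0
        · rw [if_pos (decide_eq_true hneg)]
          exact ⟨by linarith, by linarith⟩
        · rw [if_neg (by simpa using hneg)]
          push_neg at hneg
          exact ⟨by linarith, by linarith⟩
      · have : ((z + tv ((fun i => decide ((z i).re < 0), fun i => decide ((z i).im < 0)))) i).im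
            = (z i).im + (if decide ((z i).im < 0) then (1:ℝ) else 0) := by
          simp [htv, Complex.add_im]
        rw [this]
        by_cases hneg : (z i).im < 0
        · rw [if_pos (decide_eq_true hneg)]
          exact ⟨by linarith, by linarith⟩
        · rw [if_neg (by simpa using hneg)]
          push_neg at hneg
          exact ⟨by linarith, by linarith⟩
    calc (∫⁻ z in openPolydisk n, EReal.exp (ψ z))
        ≤ ∫⁻ z in ⋃ v : (Fin n → Bool) × (Fin n → Bool),
            (fun z => z + tv v) ⁻¹' fundDomain n, EReal.exp (ψ z) :=
          lintegral_mono_set hcover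
      _ ≤ ∑' v : (Fin n → Bool) × (Fin n → Bool),
            ∫⁻ z in (fun z => z + tv v) ⁻¹' fundDomain n, EReal.exp (ψ z) :=
          lintegral_iUnion_le _ _
      _ = ∑' _v : (Fin n → Bool) × (Fin n → Bool), (1 : ℝ≥0∞) := by
          congr 1
          funext v
          rw [setLIntegral_translate hper (tv v), hnorm]
      _ = (Fintype.card ((Fin n → Bool) × (Fin n → Bool)) : ℝ≥0∞) := by
          rw [tsum_fintype]
          simp
  -- combine
  have hfinal : volume (openPolydisk n) * EReal.exp (ψ 0)
      ≤ ENNReal.ofReal (Real.exp n)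
        * (Fintype.card ((Fin n → Bool) × (Fin n → Bool)) : ℝ≥0∞) :=
    hkey1.trans (hkey2.trans (by
      rw [mul_comm]
      exact mul_le_mul_right hkey3 _))
  have h0 : volume (openPolydisk n) ≠ 0 := (openPolydisk_volume_pos n).ne'
  have htop : volume (openPolydisk n) ≠ ⊤ := openPolydisk_volume_ne_top n
  rw [mul_comm] at hfinal
  calc EReal.exp (ψ 0)
      ≤ (ENNReal.ofReal (Real.exp n)
          * (Fintype.card ((Fin n → Bool) × (Fin n → Bool)) : ℝ≥0∞))
            / volume (openPolydisk n) := by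
        rw [ENNReal.le_div_iff_mul_le (Or.inl h0) (Or.inl htop)]
        exact hfinal
    _ = (volume (openPolydisk n))⁻¹ * (ENNReal.ofReal (Real.exp n)
          * (Fintype.card ((Fin n → Bool) × (Fin n → Bool)) : ℝ≥0∞)) := by
        rw [ENNReal.div_eq_inv_mul]
/-- Theorem 1.1 for the torus `ℂⁿ/Λ`: the limit canonical volume density
`x ↦ inf_{ε ∈ (0,1]} dV_ε(x)` is a constant `c` with `1 ≤ c ≤ C`, where `C < ∞`
depends only on `n`; in particular it is a well-defined positive finite constant. -/
theorem torus_canonical_density (n : ℕ) :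
    ∃ c C : ℝ≥0∞, C ≠ ⊤ ∧
      (∀ x : Fin n → ℂ, (⨅ ε ∈ Set.Ioc (0 : ℝ) 1, dVeps n ε x) = c) ∧
      1 ≤ c ∧ c ≤ C := by
  refine ⟨⨅ ε ∈ Set.Ioc (0 : ℝ) 1, dVeps n ε 0,
    (volume (openPolydisk n))⁻¹ * (ENNReal.ofReal (Real.exp n)
      * (Fintype.card ((Fin n → Bool) × (Fin n → Bool)) : ℝ≥0∞)), ?_, ?_, ?_, ?_⟩
  · exact ENNReal.mul_ne_top (ENNReal.inv_ne_top.mpr (openPolydisk_volume_pos n).ne')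
      (ENNReal.mul_ne_top ENNReal.ofReal_ne_top (ENNReal.natCast_ne_top _))
  · intro x
    exact iInf_congr fun ε => iInf_congr fun _ => dVeps_const x 0
  · refine le_iInf fun ε => le_iInf fun hε => ?_
    have hmem := Aset_zero_mem (n := n) (ε := ε) (le_of_lt hε.1)
    have h1 : (1 : ℝ≥0∞) ≤ EReal.exp ((fun _ : Fin n → ℂ => (0 : EReal)) 0) := by
      rw [show ((fun _ : Fin n → ℂ => (0 : EReal)) 0) = (0 : EReal) from rfl, EReal.exp_zero]
    exact h1.trans (le_iSup₂ (f := fun ψ (_ : ψ ∈ Aset n ε) => EReal.exp (ψ 0)) _ hmem)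
  · have h2 : (⨅ ε ∈ Set.Ioc (0 : ℝ) 1, dVeps n ε 0) ≤ dVeps n 1 0 :=
      biInf_le _ (⟨one_pos, le_refl 1⟩ : (1 : ℝ) ∈ Set.Ioc (0 : ℝ) 1)
    exact h2.trans (iSup₂_le fun ψ hψ => dVeps_one_bound hψ)

end
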